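/- Fix N > 0. There exist constants C > 0 and a₀ > 0 such that for all a with 0 < a ≤ a₀, | ∫_ℝ q_a(z)·(log(q_a(z)/q̃(z)))² dz − 2a²/N | ≤ C·a⁴. In other words, the second moment of the log-likelihood ratio log(q_a/q̃) under q_a equals 2a²/N + O(a⁴) as a → 0⁺. -/

import Mathlib

set_option maxHeartbeats 1000000


open MeasureTheory

section CoshBounds

lemma aux_mul_cosh_sub_sinh (x : ℝ) (hx : 0 ≤ x) : Real.sinh x ≤ x * Real.cosh x := by
  have hd : ∀ y : ℝ, HasDerivAt (fun t => t * Real.cosh t - Real.sinh t) (y * Real.sinh y) y := by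
    intro y
    have h1 := (hasDerivAt_id y).mul (Real.hasDerivAt_cosh y)
    have h2 := Real.hasDerivAt_sinh y
    refine (h1.sub h2).congr_deriv ?_
    simp only [id_eq]; ring
  have hmono : MonotoneOn (fun t => t * Real.cosh t - Real.sinh t) (Set.Ici 0) := by
    apply monotoneOn_of_deriv_nonneg (convex_Ici 0)
    · exact ((continuous_id.mul Real.continuous_cosh).sub Real.continuous_sinh).continuousOn
    · intro y hy
      exact (hd y).differentiableAt.differentiableWithinAt
    · intro y hy
      rw [(hd y).deriv]
      have : 0 < y := by simpa using hy
      exact mul_nonneg this.le (Real.sinh_nonneg_iff.2 this.le)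
  have := hmono (Set.self_mem_Ici) (Set.mem_Ici.2 hx) hx
  simpa using this

lemma log_cosh_le (x : ℝ) : Real.log (Real.cosh x) ≤ x ^ 2 / 2 := by
  have key : ∀ y : ℝ, 0 ≤ y → Real.log (Real.cosh y) ≤ y ^ 2 / 2 := by
    intro y hy
    have hd : ∀ t : ℝ, HasDerivAt (fun s => s ^ 2 / 2 - Real.log (Real.cosh s))
        (t - Real.sinh t / Real.cosh t) t := by
      intro t
      have h1 : HasDerivAt (fun s : ℝ => s ^ 2 / 2) t t := by
        have := (hasDerivAt_pow 2 t).div_const 2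
        simpa using this
      have h2 : HasDerivAt (fun s => Real.log (Real.cosh s)) (Real.sinh t / Real.cosh t) t := by
        have := (Real.hasDerivAt_cosh t).log (Real.cosh_pos t).ne'
        simpa using this
      exact h1.sub h2
    have hmono : MonotoneOn (fun s : ℝ => s ^ 2 / 2 - Real.log (Real.cosh s)) (Set.Ici 0) := by
      apply monotoneOn_of_deriv_nonneg (convex_Ici 0)
      · apply Continuous.continuousOn
        exact (continuous_pow 2).div_const 2 |>.sub
          (Real.continuous_cosh.log (fun t => (Real.cosh_pos t).ne'))
      · intro t ht
        exact (hd t).differentiableAt.differentiableWithinAt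
      · intro t ht
        rw [(hd t).deriv]
        have ht' : (0:ℝ) < t := by simpa using ht
        have := aux_mul_cosh_sub_sinh t ht'.le
        rw [sub_nonneg, div_le_iff₀ (Real.cosh_pos t)]
        linarith
    have := hmono Set.self_mem_Ici (Set.mem_Ici.2 hy) hy
    simp only [Real.cosh_zero, Real.log_one] at this
    linarith [this]
  rcases le_or_gt 0 x with h | h
  · exact key x h
  · have := key (-x) (by linarith)
    simpa [Real.cosh_neg] using this

lemma one_add_le_cosh (x : ℝ) : 1 + x ^ 2 / 2 ≤ Real.cosh x := by
  have key : ∀ y : ℝ, 0 ≤ y → 1 + y ^ 2 / 2 ≤ Real.cosh y := by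
    intro y hy
    have hd : ∀ t : ℝ, HasDerivAt (fun s : ℝ => Real.cosh s - (1 + s ^ 2 / 2))
        (Real.sinh t - t) t := by
      intro t
      have h1 : HasDerivAt (fun s : ℝ => 1 + s ^ 2 / 2) t t := by
        have := ((hasDerivAt_pow 2 t).div_const 2).const_add 1
        simpa using this
      exact (Real.hasDerivAt_cosh t).sub h1
    have hmono : MonotoneOn (fun s : ℝ => Real.cosh s - (1 + s ^ 2 / 2)) (Set.Ici 0) := by
      apply monotoneOn_of_deriv_nonneg (convex_Ici 0)
      · exact (Real.continuous_cosh.sub (continuous_const.add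
          ((continuous_pow 2).div_const 2))).continuousOn
      · intro t ht
        exact (hd t).differentiableAt.differentiableWithinAt
      · intro t ht
        rw [(hd t).deriv]
        have ht' : (0:ℝ) < t := by simpa using ht
        have := Real.self_lt_sinh_iff.2 ht'
        linarith
    have := hmono Set.self_mem_Ici (Set.mem_Ici.2 hy) hy
    simp only [Real.cosh_zero] at this
    linarith
  rcases le_or_gt 0 x with h | h
  · exact key x h
  · have := key (-x) (by linarith)
    simpa [Real.cosh_neg] using this

lemma le_log_cosh (x : ℝ) : x ^ 2 / 2 - x ^ 4 / 4 ≤ Real.log (Real.cosh x) := by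
  have h1 : 1 + x ^ 2 / 2 ≤ Real.cosh x := one_add_le_cosh x
  have h2 : Real.log (1 + x ^ 2 / 2) ≤ Real.log (Real.cosh x) :=
    Real.log_le_log (by positivity) h1
  have h3 : x ^ 2 / 2 - (x ^ 2 / 2) ^ 2 ≤ Real.log (1 + x ^ 2 / 2) := by
    have hpos : (0:ℝ) < 1 + x ^ 2 / 2 := by positivity
    have := Real.log_le_sub_one_of_pos (show (0:ℝ) < (1 + x ^ 2 / 2)⁻¹ by positivity)
    rw [Real.log_inv] at this
    have h4 : (1 + x ^ 2 / 2)⁻¹ - 1 = -(x ^ 2 / 2) / (1 + x ^ 2 / 2) := by field_simp; ring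
    rw [h4, neg_div] at this
    have h5 : (x ^ 2 / 2) / (1 + x ^ 2 / 2) ≤ Real.log (1 + x ^ 2 / 2) := by linarith
    have h6 : x ^ 2 / 2 - (x ^ 2 / 2) ^ 2 ≤ (x ^ 2 / 2) / (1 + x ^ 2 / 2) := by
      rw [le_div_iff₀ hpos]
      nlinarith [sq_nonneg (x^2/2)]
    linarith
  nlinarith [h2, h3]

lemma key_bound (x : ℝ) :
    |(x - Real.log (Real.cosh x)) ^ 2 - (x ^ 2 - x ^ 3)| ≤ x ^ 4 / 4 + |x| ^ 5 / 2 := by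
  set L := Real.log (Real.cosh x) with hL
  have h0 : 0 ≤ L := Real.log_nonneg (Real.one_le_cosh x)
  have h1 : L ≤ x ^ 2 / 2 := log_cosh_le x
  have h2 : x ^ 2 / 2 - x ^ 4 / 4 ≤ L := le_log_cosh x
  have hid : (x - L) ^ 2 - (x ^ 2 - x ^ 3) = L ^ 2 + 2 * x * (x ^ 2 / 2 - L) := by ring
  rw [hid]
  have hA : |L ^ 2| ≤ x ^ 4 / 4 := by
    rw [abs_of_nonneg (sq_nonneg L)]
    nlinarith
  have hB : |2 * x * (x ^ 2 / 2 - L)| ≤ |x| ^ 5 / 2 := by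
    rw [abs_mul, abs_mul, abs_two]
    have habs : |x ^ 2 / 2 - L| ≤ x ^ 4 / 4 := by
      rw [abs_le]; constructor <;> linarith
    calc 2 * |x| * |x ^ 2 / 2 - L| ≤ 2 * |x| * (x ^ 4 / 4) := by
          apply mul_le_mul_of_nonneg_left habs (by positivity)
      _ = |x| ^ 5 / 2 := by
          rw [show x ^ 4 = |x| ^ 4 by rw [← abs_pow, abs_of_nonneg (by positivity)]]
          ring
  calc |L ^ 2 + 2 * x * (x ^ 2 / 2 - L)| ≤ |L ^ 2| + |2 * x * (x ^ 2 / 2 - L)| := abs_add_le _ _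
    _ ≤ x ^ 4 / 4 + |x| ^ 5 / 2 := add_le_add hA hB

end CoshBounds

section GaussIntegrals

open Real

lemma integrable_pow_gauss {b : ℝ} (hb : 0 < b) (n : ℕ) :
    Integrable fun x : ℝ => x ^ n * Real.exp (-b * x ^ 2) := by
  have h : (-1 : ℝ) < n := lt_of_lt_of_le (by norm_num) (Nat.cast_nonneg n)
  simpa [Real.rpow_natCast] using integrable_rpow_mul_exp_neg_mul_sq hb h

lemma integrable_abs_pow_gauss {b : ℝ} (hb : 0 < b) (n : ℕ) :
    Integrable fun x : ℝ => |x| ^ n * Real.exp (-b * x ^ 2) := by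
  have := (integrable_pow_gauss hb n).abs
  simpa [abs_mul, abs_pow, abs_of_nonneg (Real.exp_pos _).le] using this

lemma integral_odd_zero (f : ℝ → ℝ) (hf : ∀ x, f (-x) = -f x) : ∫ x : ℝ, f x = 0 := by
  have h := MeasureTheory.integral_neg_eq_self f (volume : Measure ℝ)
  simp_rw [hf] at h
  rw [integral_neg] at h
  linarith

lemma integral_pow_two_gauss {b : ℝ} (hb : 0 < b) :
    ∫ x : ℝ, x ^ 2 * Real.exp (-b * x ^ 2) = Real.sqrt (π / b) / (2 * b) := by
  have hu : ∀ x : ℝ, HasDerivAt (fun y : ℝ => y) (1 : ℝ) x := fun x => hasDerivAt_id x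
  have hv : ∀ x : ℝ, HasDerivAt (fun y : ℝ => -(2 * b)⁻¹ * Real.exp (-b * y ^ 2))
      (x * Real.exp (-b * x ^ 2)) x := by
    intro x
    have h1 : HasDerivAt (fun y : ℝ => -b * y ^ 2) (-b * (2 * x)) x := by
      have := (hasDerivAt_pow 2 x).const_mul (-b)
      simpa using this
    have h3 := (h1.exp).const_mul (-(2 * b)⁻¹)
    refine h3.congr_deriv ?_
    have hb0 : b ≠ 0 := hb.ne'; field_simp
  have huv' : Integrable ((fun y : ℝ => y) * fun x => x * Real.exp (-b * x ^ 2)) := by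
    have : ((fun y : ℝ => y) * fun x => x * Real.exp (-b * x ^ 2))
        = fun x => x ^ 2 * Real.exp (-b * x ^ 2) := by
      funext x; simp [Pi.mul_apply]; ring
    rw [this]
    exact integrable_pow_gauss hb 2
  have hu'v : Integrable ((fun _ : ℝ => (1:ℝ)) * fun y : ℝ => -(2 * b)⁻¹ * Real.exp (-b * y ^ 2)) := by
    have : ((fun _ : ℝ => (1:ℝ)) * fun y : ℝ => -(2 * b)⁻¹ * Real.exp (-b * y ^ 2))
        = fun y => -(2 * b)⁻¹ * Real.exp (-b * y ^ 2) := by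
      funext x; simp [Pi.mul_apply]
    rw [this]
    exact (integrable_exp_neg_mul_sq hb).const_mul _
  have huv : Integrable ((fun y : ℝ => y) * fun y : ℝ => -(2 * b)⁻¹ * Real.exp (-b * y ^ 2)) := by
    have : ((fun y : ℝ => y) * fun y : ℝ => -(2 * b)⁻¹ * Real.exp (-b * y ^ 2))
        = fun y => -(2 * b)⁻¹ * (y * Real.exp (-b * y ^ 2)) := by
      funext x; simp [Pi.mul_apply]; ring
    rw [this]
    exact (integrable_mul_exp_neg_mul_sq hb).const_mul _
  have key := integral_mul_deriv_eq_deriv_mul_of_integrable (fun x _ => hu x) (fun x _ => hv x) huv' hu'v huv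
  have h1 : ∫ x : ℝ, x * (x * Real.exp (-b * x ^ 2)) = ∫ x : ℝ, x ^ 2 * Real.exp (-b * x ^ 2) := by
    congr 1; funext x; ring
  have h2 : ∫ x : ℝ, (1:ℝ) * (-(2 * b)⁻¹ * Real.exp (-b * x ^ 2))
      = -(2 * b)⁻¹ * Real.sqrt (π / b) := by
    simp_rw [one_mul]
    rw [integral_const_mul, integral_gaussian]
  rw [h1, h2] at key
  rw [key]
  field_simp

lemma one_add_pow_le (t : ℝ) (ht : 0 ≤ t) (k : ℕ) : (1 + t) ^ k ≤ 2 ^ k * (1 + t ^ k) := by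
  rcases le_total t 1 with h | h
  · have h1 : (1 + t) ^ k ≤ 2 ^ k := pow_le_pow_left₀ (by linarith) (by linarith) k
    nlinarith [pow_nonneg ht k, pow_nonneg (show (0:ℝ) ≤ 2 by norm_num) k]
  · have h1 : (1 + t) ^ k ≤ (2 * t) ^ k := pow_le_pow_left₀ (by linarith) (by linarith) k
    have h2 : (2 * t) ^ k = 2 ^ k * t ^ k := mul_pow 2 t k
    nlinarith [pow_nonneg (show (0:ℝ) ≤ 2 by norm_num) k]

end GaussIntegrals

/-- Density of the Gaussian distribution with mean `0` and variance `N/2`. -/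
noncomputable def q0 (N z : ℝ) : ℝ := (Real.sqrt (Real.pi * N))⁻¹ * Real.exp (-z ^ 2 / N)

/-- Density of the Gaussian distribution with mean `a` and variance `N/2`. -/
noncomputable def qa (N a z : ℝ) : ℝ := (Real.sqrt (Real.pi * N))⁻¹ * Real.exp (-(z - a) ^ 2 / N)

/-- The binary mixture density `½ q_a + ½ q_{-a}`. -/
noncomputable def qmix (N a z : ℝ) : ℝ := (1 / 2) * qa N a z + (1 / 2) * qa N (-a) z

/-- The log-likelihood ratio `log (q̃(z)/q₀(z))`. -/
noncomputable def llr (N a z : ℝ) : ℝ := Real.log (qmix N a z / q0 N z)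

section Helpers

open Real

variable {N : ℝ}

lemma q0_apply (N z : ℝ) : q0 N z = (Real.sqrt (π * N))⁻¹ * Real.exp (-(1/N) * z ^ 2) := by
  have h : -z ^ 2 / N = -(1/N) * z ^ 2 := by ring
  rw [q0, h]

lemma q0_pos (hN : 0 < N) (z : ℝ) : 0 < q0 N z := by
  have : (0:ℝ) < Real.sqrt (π * N) := Real.sqrt_pos.2 (by positivity)
  rw [q0]; positivity

lemma q0_cont : Continuous (q0 N) := by
  unfold q0; fun_prop

lemma qa_pos (hN : 0 < N) (a z : ℝ) : 0 < qa N a z := by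
  have : (0:ℝ) < Real.sqrt (π * N) := Real.sqrt_pos.2 (by positivity)
  rw [qa]; positivity

lemma qa_shift (N a w : ℝ) : qa N a (w + a) = q0 N w := by
  simp [qa, q0]

lemma integrable_q0_pow (hN : 0 < N) (k : ℕ) : Integrable fun w => q0 N w * w ^ k := by
  have hb : (0:ℝ) < 1/N := by positivity
  have heq : (fun w => q0 N w * w ^ k)
      = fun w => (Real.sqrt (π * N))⁻¹ * (w ^ k * Real.exp (-(1/N) * w ^ 2)) := by
    funext w; rw [q0_apply]; ring
  rw [heq]
  exact (integrable_pow_gauss hb k).const_mul _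

lemma integrable_q0_one_add_abs (hN : 0 < N) (k : ℕ) :
    Integrable fun w => q0 N w * (1 + |w|) ^ k := by
  have hb : (0:ℝ) < 1/N := by positivity
  have habs : Integrable fun w => q0 N w * |w| ^ k := by
    have heq : (fun w => q0 N w * |w| ^ k)
        = fun w => (Real.sqrt (π * N))⁻¹ * (|w| ^ k * Real.exp (-(1/N) * w ^ 2)) := by
      funext w; rw [q0_apply]; ring
    rw [heq]
    exact (integrable_abs_pow_gauss hb k).const_mul _
  have h0 : Integrable fun w => q0 N w := by
    have := integrable_q0_pow hN 0
    simpa using this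
  have hint : Integrable fun w => 2 ^ k * q0 N w + 2 ^ k * (q0 N w * |w| ^ k) :=
    (h0.const_mul _).add (habs.const_mul _)
  apply hint.mono'
  · exact (q0_cont.mul ((continuous_const.add continuous_abs).pow k)).aestronglyMeasurable
  · refine Filter.Eventually.of_forall fun w => ?_
    have h0 : 0 ≤ q0 N w := (q0_pos hN w).le
    have h1 : (1 + |w|) ^ k ≤ 2 ^ k * (1 + |w| ^ k) := one_add_pow_le _ (abs_nonneg w) k
    rw [Real.norm_eq_abs, abs_of_nonneg (by positivity)]
    nlinarith [pow_nonneg (abs_nonneg w) k]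

lemma q0_moment_zero (hN : 0 < N) : ∫ w, q0 N w = 1 := by
  have heq : (fun w => q0 N w) = fun w => (Real.sqrt (π * N))⁻¹ * Real.exp (-(1/N) * w ^ 2) := by
    funext w; rw [q0_apply]
  rw [heq, integral_const_mul, integral_gaussian]
  have h : π / (1/N) = π * N := by field_simp
  rw [h]
  exact inv_mul_cancel₀ (Real.sqrt_pos.2 (by positivity)).ne'

lemma q0_moment_one : ∫ w, q0 N w * w ^ 1 = 0 := by
  apply integral_odd_zero
  intro w
  have h : q0 N (-w) = q0 N w := by simp [q0]
  rw [h]; ring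

lemma q0_moment_three : ∫ w, q0 N w * w ^ 3 = 0 := by
  apply integral_odd_zero
  intro w
  have h : q0 N (-w) = q0 N w := by simp [q0]
  rw [h]; ring

lemma q0_moment_two (hN : 0 < N) : ∫ w, q0 N w * w ^ 2 = N / 2 := by
  have hb : (0:ℝ) < 1/N := by positivity
  have heq : (fun w => q0 N w * w ^ 2)
      = fun w => (Real.sqrt (π * N))⁻¹ * (w ^ 2 * Real.exp (-(1/N) * w ^ 2)) := by
    funext w; rw [q0_apply]; ring
  rw [heq, integral_const_mul, integral_pow_two_gauss hb]
  have h : π / (1/N) = π * N := by field_simp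
  rw [h]
  have hs : Real.sqrt (π * N) ≠ 0 := (Real.sqrt_pos.2 (by positivity)).ne'
  field_simp

lemma log_ratio (hN : 0 < N) (a z : ℝ) :
    Real.log (qa N a z / qmix N a z)
      = 2*a*z/N - Real.log (Real.cosh (2*a*z/N)) := by
  set x := 2*a*z/N with hx
  have hqa := qa_pos hN a z
  have hmix : qmix N a z = qa N a z * (Real.exp (-x) * Real.cosh x) := by
    have h2 : Real.exp (-(z - -a)^2/N)
        = Real.exp (-(z-a)^2/N) * (Real.exp (-x) * Real.exp (-x)) := by
      rw [← Real.exp_add, ← Real.exp_add]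
      congr 1
      rw [hx]; field_simp; ring
    rw [qmix, qa, qa, Real.cosh_eq, h2, Real.exp_neg]
    have he : Real.exp x ≠ 0 := Real.exp_ne_zero x
    field_simp
  have hstep : qa N a z / qmix N a z = Real.exp x / Real.cosh x := by
    rw [hmix, Real.exp_neg]
    have hc := Real.cosh_pos x
    have he : Real.exp x ≠ 0 := Real.exp_ne_zero x
    field_simp
  rw [hstep, Real.log_div (Real.exp_ne_zero x) (Real.cosh_pos x).ne', Real.log_exp]

end Helpers

/-- The second moment of `log(q_a/q̃)` under `q_a` equals `2a²/N + O(a⁴)` as `a → 0⁺`. -/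
theorem second_moment_log_qa_qmix (N : ℝ) (hN : 0 < N) :
    ∃ C > (0 : ℝ), ∃ a₀ > (0 : ℝ), ∀ a : ℝ, 0 < a → a ≤ a₀ →
      |(∫ z : ℝ, qa N a z * (Real.log (qa N a z / qmix N a z)) ^ 2) - 2 * a ^ 2 / N|
        ≤ C * a ^ 4 := by
  have hN0 : N ≠ 0 := hN.ne'
  set ψ : ℝ → ℝ := fun w => (2/N)^4 * (1+|w|)^4 / 4 + (2/N)^5 * (1+|w|)^5 / 2 with hψdef
  have hψnn : ∀ w, 0 ≤ ψ w := fun w => by rw [hψdef]; positivity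
  have hψint : Integrable fun w => q0 N w * ψ w := by
    have heq : (fun w => q0 N w * ψ w)
        = fun w => ((2/N)^4/4) * (q0 N w * (1+|w|)^4) + ((2/N)^5/2) * (q0 N w * (1+|w|)^5) := by
      funext w; rw [hψdef]; ring
    rw [heq]
    exact ((integrable_q0_one_add_abs hN 4).const_mul _).add
      ((integrable_q0_one_add_abs hN 5).const_mul _)
  set K : ℝ := ∫ w, q0 N w * ψ w with hKdef
  have hK0 : 0 ≤ K :=
    integral_nonneg fun w => mul_nonneg (q0_pos hN w).le (hψnn w)
  refine ⟨8/N^2 + 8/N^3 + K + 1, by positivity, 1, one_pos, ?_⟩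
  intro a ha ha1
  set G : ℝ → ℝ := fun x => (x - Real.log (Real.cosh x)) ^ 2 with hGdef
  set φ : ℝ → ℝ := fun w => 2*a*(w+a)/N with hφdef
  -- Step A : rewrite the integral
  have hA : (∫ z : ℝ, qa N a z * (Real.log (qa N a z / qmix N a z)) ^ 2)
      = ∫ w : ℝ, q0 N w * G (φ w) := by
    have h1 : (∫ z : ℝ, qa N a z * (Real.log (qa N a z / qmix N a z)) ^ 2)
        = ∫ z : ℝ, qa N a z * G (2*a*z/N) := by
      congr 1; funext z
      rw [log_ratio hN a z, hGdef]
    rw [h1]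
    have h2 := (integral_add_right_eq_self (μ := (volume : Measure ℝ))
      (fun z => qa N a z * G (2*a*z/N)) a).symm
    rw [h2]
    congr 1; funext w
    rw [qa_shift]
  -- the polynomial part
  set P : ℝ → ℝ := fun w => (φ w)^2 - (φ w)^3 with hPdef
  set A : ℝ := 4*a^2/N^2 with hAdef
  set B : ℝ := 8*a^3/N^3 with hBdef
  have hPeq : (fun w => q0 N w * P w) = fun w =>
      (-B) * (q0 N w * w^3) + (A - 3*a*B) * (q0 N w * w^2)
      + (2*a*A - 3*a^2*B) * (q0 N w * w^1) + (a^2*A - a^3*B) * (q0 N w * w^0) := by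
    funext w
    rw [hPdef, hφdef, hAdef, hBdef]
    simp only
    field_simp
    ring
  have i3 : Integrable fun w => (-B) * (q0 N w * w^3) := (integrable_q0_pow hN 3).const_mul _
  have i2 : Integrable fun w => (A - 3*a*B) * (q0 N w * w^2) := (integrable_q0_pow hN 2).const_mul _
  have i1 : Integrable fun w => (2*a*A - 3*a^2*B) * (q0 N w * w^1) :=
    (integrable_q0_pow hN 1).const_mul _
  have i0 : Integrable fun w => (a^2*A - a^3*B) * (q0 N w * w^0) :=
    (integrable_q0_pow hN 0).const_mul _
  have i32 : Integrable fun w => (-B) * (q0 N w * w^3) + (A - 3*a*B) * (q0 N w * w^2) := i3.add i2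
  have i321 : Integrable fun w => (-B) * (q0 N w * w^3) + (A - 3*a*B) * (q0 N w * w^2)
      + (2*a*A - 3*a^2*B) * (q0 N w * w^1) := i32.add i1
  have hPint : Integrable fun w => q0 N w * P w := by
    rw [hPeq]
    exact i321.add i0
  have hm0 : ∫ w, q0 N w * w ^ 0 = 1 := by
    have := q0_moment_zero hN
    simpa using this
  have hPval : ∫ w, q0 N w * P w = 2*a^2/N - 8*a^4/N^2 - 8*a^6/N^3 := by
    rw [hPeq, integral_add i321 i0, integral_add i32 i1, integral_add i3 i2,
      integral_const_mul, integral_const_mul, integral_const_mul, integral_const_mul,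
      q0_moment_three, q0_moment_two hN, q0_moment_one, hm0]
    rw [hAdef, hBdef]
    field_simp
    ring
  -- pointwise remainder bound
  have hφbound : ∀ w : ℝ, |φ w| ≤ 2*a/N * (1 + |w|) := by
    intro w
    rw [hφdef]
    simp only
    have h1 : |2*a*(w+a)/N| = 2*a/N * |w+a| := by
      rw [abs_div, abs_of_nonneg hN.le, abs_mul, abs_mul, abs_two, abs_of_nonneg ha.le]
      ring
    rw [h1]
    have h2 : |w+a| ≤ 1 + |w| := by
      calc |w+a| ≤ |w| + |a| := abs_add_le _ _
        _ ≤ 1 + |w| := by rw [abs_of_nonneg ha.le]; linarith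
    exact mul_le_mul_of_nonneg_left h2 (by positivity)
  have hRkey : ∀ w : ℝ, |G (φ w) - P w| ≤ a^4 * ψ w := by
    intro w
    have h1 : |G (φ w) - P w| ≤ (φ w)^4/4 + |φ w|^5/2 := by
      rw [hGdef, hPdef]
      exact key_bound (φ w)
    have hφ := hφbound w
    have ht1 : (1:ℝ) ≤ 1 + |w| := by linarith [abs_nonneg w]
    have h4 : (φ w)^4 ≤ (2*a/N)^4 * (1+|w|)^4 := by
      have habs : (φ w)^4 = |φ w|^4 := by rw [← abs_pow, abs_of_nonneg (by positivity)]
      rw [habs, show (2*a/N)^4 * (1+|w|)^4 = (2*a/N*(1+|w|))^4 by ring]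
      exact pow_le_pow_left₀ (abs_nonneg _) hφ 4
    have h5 : |φ w|^5 ≤ (2*a/N)^5 * (1+|w|)^5 := by
      rw [show (2*a/N)^5 * (1+|w|)^5 = (2*a/N*(1+|w|))^5 by ring]
      exact pow_le_pow_left₀ (abs_nonneg _) hφ 5
    have ha5 : a^5 ≤ a^4 := by
      have := mul_le_mul_of_nonneg_left ha1 (show (0:ℝ) ≤ a^4 by positivity)
      calc a^5 = a^4 * a := by ring
        _ ≤ a^4 * 1 := this
        _ = a^4 := by ring
    have hψw : ψ w = (2/N)^4 * (1+|w|)^4 / 4 + (2/N)^5 * (1+|w|)^5 / 2 := by rw [hψdef]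
    have hc4 : (2*a/N)^4 * (1+|w|)^4 = a^4 * ((2/N)^4 * (1+|w|)^4) := by ring
    have hc5 : (2*a/N)^5 * (1+|w|)^5 = a^5 * ((2/N)^5 * (1+|w|)^5) := by ring
    have hp5 : (0:ℝ) ≤ (2/N)^5 * (1+|w|)^5 := by positivity
    have h5' : a^5 * ((2/N)^5 * (1+|w|)^5) ≤ a^4 * ((2/N)^5 * (1+|w|)^5) :=
      mul_le_mul_of_nonneg_right ha5 hp5
    calc |G (φ w) - P w| ≤ (φ w)^4/4 + |φ w|^5/2 := h1
      _ ≤ a^4 * ((2/N)^4 * (1+|w|)^4)/4 + a^4 * ((2/N)^5 * (1+|w|)^5)/2 := by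
          rw [hc4] at h4; rw [hc5] at h5
          linarith
      _ = a^4 * ψ w := by rw [hψw]; ring
  -- integrability of the full integrand
  have hGcont : Continuous G := by
    rw [hGdef]
    exact ((continuous_id.sub (Real.continuous_cosh.log
      (fun x => (Real.cosh_pos x).ne'))).pow 2)
  have hφcont : Continuous φ := by
    rw [hφdef]
    fun_prop
  have hGint : Integrable fun w => q0 N w * G (φ w) := by
    set M : ℝ := (2*a/N)^2 + (2*a/N)^3 + (2*a/N)^4/4 + (2*a/N)^5/2 with hMdef
    have hbig : Integrable fun w => M * (q0 N w * (1+|w|)^5) :=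
      (integrable_q0_one_add_abs hN 5).const_mul _
    apply hbig.mono'
    · exact (q0_cont.mul (hGcont.comp hφcont)).aestronglyMeasurable
    · refine Filter.Eventually.of_forall fun w => ?_
      have hq := (q0_pos hN w).le
      have ht1 : (1:ℝ) ≤ 1 + |w| := by linarith [abs_nonneg w]
      set t := 1 + |w| with htdef
      have htn : 0 ≤ t := by linarith
      have hφ := hφbound w
      have hGnn : 0 ≤ G (φ w) := by rw [hGdef]; positivity
      -- G(x) ≤ x² + |x|³ + x⁴/4 + |x|⁵/2
      have hkb := key_bound (φ w)
      have hGle : G (φ w) ≤ (φ w)^2 + |φ w|^3 + (φ w)^4/4 + |φ w|^5/2 := by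
        have hub := (abs_le.1 hkb).2
        have h3 : -(φ w)^3 ≤ |φ w|^3 := by
          rw [← abs_pow]; exact neg_le_abs _
        have hG' : G (φ w) = (φ w - Real.log (Real.cosh (φ w)))^2 := by rw [hGdef]
        rw [hG']
        linarith
      -- each power of |φ w| bounded by (2a/N)^k t^k ≤ (2a/N)^k t^5
      have hD : (0:ℝ) ≤ 2*a/N := by positivity
      have e2 : (φ w)^2 ≤ (2*a/N)^2 * t^5 := by
        have : (φ w)^2 = |φ w|^2 := (sq_abs _).symm
        rw [this]
        calc |φ w|^2 ≤ (2*a/N*t)^2 := pow_le_pow_left₀ (abs_nonneg _) hφ 2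
          _ = (2*a/N)^2 * t^2 := by ring
          _ ≤ (2*a/N)^2 * t^5 := by
              apply mul_le_mul_of_nonneg_left (pow_le_pow_right₀ ht1 (by norm_num)) (by positivity)
      have e3 : |φ w|^3 ≤ (2*a/N)^3 * t^5 := by
        calc |φ w|^3 ≤ (2*a/N*t)^3 := pow_le_pow_left₀ (abs_nonneg _) hφ 3
          _ = (2*a/N)^3 * t^3 := by ring
          _ ≤ (2*a/N)^3 * t^5 := by
              apply mul_le_mul_of_nonneg_left (pow_le_pow_right₀ ht1 (by norm_num)) (by positivity)
      have e4 : (φ w)^4 ≤ (2*a/N)^4 * t^5 := by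
        have : (φ w)^4 = |φ w|^4 := by rw [← abs_pow, abs_of_nonneg (by positivity)]
        rw [this]
        calc |φ w|^4 ≤ (2*a/N*t)^4 := pow_le_pow_left₀ (abs_nonneg _) hφ 4
          _ = (2*a/N)^4 * t^4 := by ring
          _ ≤ (2*a/N)^4 * t^5 := by
              apply mul_le_mul_of_nonneg_left (pow_le_pow_right₀ ht1 (by norm_num)) (by positivity)
      have e5 : |φ w|^5 ≤ (2*a/N)^5 * t^5 := by
        calc |φ w|^5 ≤ (2*a/N*t)^5 := pow_le_pow_left₀ (abs_nonneg _) hφ 5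
          _ = (2*a/N)^5 * t^5 := by ring
      have hGM : G (φ w) ≤ M * t^5 := by
        rw [hMdef]
        have hexpM : ((2*a/N)^2 + (2*a/N)^3 + (2*a/N)^4/4 + (2*a/N)^5/2) * t^5
            = (2*a/N)^2*t^5 + (2*a/N)^3*t^5 + (2*a/N)^4*t^5/4 + (2*a/N)^5*t^5/2 := by ring
        rw [hexpM]
        linarith [hGle, e2, e3, e4, e5]
      rw [Real.norm_eq_abs, abs_mul, abs_of_nonneg hq, abs_of_nonneg hGnn]
      calc q0 N w * G (φ w) ≤ q0 N w * (M * t^5) := mul_le_mul_of_nonneg_left hGM hq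
        _ = M * (q0 N w * (1+|w|)^5) := by rw [htdef]; ring
  have hRsub : Integrable fun w => q0 N w * G (φ w) - q0 N w * P w := hGint.sub hPint
  have hRint : Integrable fun w => q0 N w * (G (φ w) - P w) := by
    apply hRsub.congr
    filter_upwards with w
    ring
  have hψint' : Integrable fun w => a^4 * (q0 N w * ψ w) := hψint.const_mul _
  have hRle : |∫ w, q0 N w * (G (φ w) - P w)| ≤ a^4 * K := by
    have h1 : |∫ w, q0 N w * (G (φ w) - P w)| ≤ ∫ w, |q0 N w * (G (φ w) - P w)| := by
      have := MeasureTheory.norm_integral_le_integral_norm (μ := volume)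
        (fun w => q0 N w * (G (φ w) - P w))
      simpa only [Real.norm_eq_abs] using this
    have h2 : (∫ w, |q0 N w * (G (φ w) - P w)|) ≤ ∫ w, a^4 * (q0 N w * ψ w) := by
      apply integral_mono hRint.abs hψint'
      intro w
      dsimp only
      rw [abs_mul, abs_of_nonneg (q0_pos hN w).le]
      calc q0 N w * |G (φ w) - P w| ≤ q0 N w * (a^4 * ψ w) :=
            mul_le_mul_of_nonneg_left (hRkey w) (q0_pos hN w).le
        _ = a^4 * (q0 N w * ψ w) := by ring
    have h3 : (∫ w, a^4 * (q0 N w * ψ w)) = a^4 * K := by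
      rw [integral_const_mul, ← hKdef]
    linarith
  -- assemble
  have hGP : (fun w : ℝ => q0 N w * G (φ w))
      = fun w => q0 N w * P w + q0 N w * (G (φ w) - P w) := by
    funext w; ring
  have hIsplit : (∫ w, q0 N w * G (φ w))
      = (∫ w, q0 N w * P w) + ∫ w, q0 N w * (G (φ w) - P w) := by
    rw [hGP, integral_add hPint hRint]
  rw [hA, hIsplit, hPval]
  have harith : 2*a^2/N - 8*a^4/N^2 - 8*a^6/N^3 + (∫ w, q0 N w * (G (φ w) - P w)) - 2*a^2/N
      = (∫ w, q0 N w * (G (φ w) - P w)) - (8*a^4/N^2 + 8*a^6/N^3) := by ring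
  rw [harith]
  have h6 : a^6 ≤ a^4 := by
    have ha2 : a^2 ≤ 1 := by nlinarith
    calc a^6 = a^4 * a^2 := by ring
      _ ≤ a^4 * 1 := mul_le_mul_of_nonneg_left ha2 (by positivity)
      _ = a^4 := by ring
  have h6' : 8*a^6/N^3 ≤ 8*a^4/N^3 := by
    have := mul_le_mul_of_nonneg_right h6 (div_pos (by norm_num : (0:ℝ) < 8) (pow_pos hN 3)).le
    calc 8*a^6/N^3 = a^6 * (8/N^3) := by ring
      _ ≤ a^4 * (8/N^3) := this
      _ = 8*a^4/N^3 := by ring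
  have habs : |(∫ w, q0 N w * (G (φ w) - P w)) - (8*a^4/N^2 + 8*a^6/N^3)|
      ≤ |∫ w, q0 N w * (G (φ w) - P w)| + (8*a^4/N^2 + 8*a^6/N^3) := by
    rw [sub_eq_add_neg]
    refine (abs_add_le _ _).trans ?_
    have hnn : (0:ℝ) ≤ 8*a^4/N^2 + 8*a^6/N^3 :=
      add_nonneg (div_nonneg (by positivity) (pow_pos hN 2).le)
        (div_nonneg (by positivity) (pow_pos hN 3).le)
    rw [abs_neg, abs_of_nonneg hnn]
  have hexp : (8/N^2 + 8/N^3 + K + 1) * a^4 = 8*a^4/N^2 + 8*a^4/N^3 + K*a^4 + a^4 := by ring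
  have ha4 : (0:ℝ) ≤ a^4 := by positivity
  have hKa : a^4 * K = K * a^4 := by ring
  linarith [hRle, habs, h6', hexp, hKa, ha4]
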